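/- Let $m \ge 2$, $z > 0$ real, and $z_j \in \mathbb{C}$ with $\pi - \pi/m < |\operatorname{Arg} z_j| \le \pi$. Let $\omega_k = e^{(2k-1)\pi i/m}$. Then for every $k$ with $2 \le k < m$, $|\omega_k z - z_j| < |\omega_0 z - \overline{z_j}|$. -/

import Mathlib

/-- The `m`-th roots of `-1`: `ω_k = e^{(2k-1)πi/m}`. -/
noncomputable def omegaRoot (m k : ℕ) : ℂ :=
  Complex.exp ((2 * (k : ℂ) - 1) * Real.pi * Complex.I / m)

/-- `|x e^{is} - y e^{it}|² = x² + y² - 2xy cos(s-t)`. -/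
lemma abs_sq_exp (x y s t : ℝ) :
    ‖(x : ℂ) * Complex.exp (s * Complex.I) - (y : ℂ) * Complex.exp (t * Complex.I)‖ ^ 2
      = x ^ 2 + y ^ 2 - 2 * x * y * Real.cos (s - t) := by
  rw [Complex.sq_norm, Complex.normSq_apply]
  simp [Complex.exp_ofReal_mul_I_re, Complex.exp_ofReal_mul_I_im, Real.cos_sub]
  nlinarith [Real.sin_sq_add_cos_sq s, Real.sin_sq_add_cos_sq t, Real.sin_sq_add_cos_sq (s-t)]

/-- Core trig inequality. -/
lemma core_trig (α θ β : ℝ) (hα : 0 < α) (hα3 : 3 * α ≤ Real.pi)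
    (hθ1 : Real.pi - α < |θ|) (hθ2 : |θ| ≤ Real.pi)
    (hβ1 : 3 * α ≤ β) (hβ2 : β ≤ 2 * Real.pi - 3 * α) :
    Real.cos (θ - α) < Real.cos (β - θ) := by
  have hπ := Real.pi_pos
  rcases abs_cases θ with ⟨he, h0⟩ | ⟨he, h0⟩
  · rw [he] at hθ1 hθ2
    have h1 : Real.cos (θ - α) < Real.cos (Real.pi - 2 * α) :=
      Real.cos_lt_cos_of_nonneg_of_le_pi (by linarith) (by linarith) (by linarith)
    have h2 : Real.cos (Real.pi - 2 * α) ≤ Real.cos (β - θ) := by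
      rw [← Real.cos_abs (β - θ)]
      exact Real.cos_le_cos_of_nonneg_of_le_pi (abs_nonneg _) (by linarith)
        (abs_le.mpr ⟨by linarith, by linarith⟩)
    linarith
  · rw [he] at hθ1 hθ2
    have h1 : Real.cos (θ - α) < Real.cos (Real.pi - 2 * α) := by
      rw [← Real.cos_add_two_pi (θ - α)]
      exact Real.cos_lt_cos_of_nonneg_of_le_pi (by linarith) (by linarith) (by linarith)
    have h2 : Real.cos (Real.pi - 2 * α) ≤ Real.cos (β - θ) := by
      rw [← Real.cos_sub_two_pi (β - θ), ← Real.cos_abs (β - θ - 2 * Real.pi)]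
      exact Real.cos_le_cos_of_nonneg_of_le_pi (abs_nonneg _) (by linarith)
        (abs_le.mpr ⟨by linarith, by linarith⟩)
    linarith

/-- If `m ≥ 2`, `z > 0` and `π - π/m < |Arg z_j| ≤ π`, then for `2 ≤ k < m` one has
`|ω_k z - z_j| < |ω_0 z - conj z_j|`. -/
theorem stmt_3 (m : ℕ) (hm : 2 ≤ m) (z : ℝ) (hz : 0 < z) (zj : ℂ)
    (harg : Real.pi - Real.pi / m < |zj.arg| ∧ |zj.arg| ≤ Real.pi)
    (k : ℕ) (hk2 : 2 ≤ k) (hkm : k < m) :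
    ‖omegaRoot m k * z - zj‖ <
      ‖omegaRoot m 0 * z - (starRingEnd ℂ) zj‖ := by
  have hπ := Real.pi_pos
  have hm3 : 3 ≤ m := lt_of_le_of_lt hk2 hkm
  have hmR : (0:ℝ) < m := by positivity
  set α : ℝ := Real.pi / m with hα
  set θ : ℝ := zj.arg with hθ
  set r : ℝ := ‖zj‖ with hr
  have hmα : (m : ℝ) * α = Real.pi := by rw [hα]; field_simp
  have hα0 : 0 < α := by positivity
  have hα3 : 3 * α ≤ Real.pi := by
    have : (3:ℝ) ≤ m := by exact_mod_cast hm3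
    nlinarith
  have hzj : zj ≠ 0 := by
    intro h
    rw [hθ, h] at harg
    simp [Complex.arg_zero] at harg
    linarith [harg.1]
  have hr0 : 0 < r := by simpa [hr] using (norm_pos_iff.mpr hzj)
  have hmC : (m : ℂ) ≠ 0 := by exact_mod_cast hmR.ne'
  have ezj : zj = (r : ℂ) * Complex.exp (θ * Complex.I) :=
    (Complex.norm_mul_exp_arg_mul_I zj).symm
  have eczj : (starRingEnd ℂ) zj = (r : ℂ) * Complex.exp ((-θ : ℝ) * Complex.I) := by
    rw [ezj]
    simp [map_mul, ← Complex.exp_conj, Complex.conj_ofReal]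
  have ek : omegaRoot m k * z = (z : ℂ) * Complex.exp (((2 * k - 1) * α : ℝ) * Complex.I) := by
    rw [omegaRoot, mul_comm]
    congr 2
    push_cast [hα]
    field_simp
  have e0 : omegaRoot m 0 * z = (z : ℂ) * Complex.exp (((-α) : ℝ) * Complex.I) := by
    rw [omegaRoot, mul_comm]
    congr 2
    push_cast [hα]
    field_simp
    norm_num
  -- squares
  have sq1 : ‖omegaRoot m k * z - zj‖ ^ 2
      = z ^ 2 + r ^ 2 - 2 * z * r * Real.cos ((2 * k - 1) * α - θ) := by
    rw [ek]; conv_lhs => rw [ezj]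
    exact abs_sq_exp z r _ θ
  have sq2 : ‖omegaRoot m 0 * z - (starRingEnd ℂ) zj‖ ^ 2
      = z ^ 2 + r ^ 2 - 2 * z * r * Real.cos (θ - α) := by
    rw [e0, eczj, abs_sq_exp z r (-α) (-θ)]
    ring_nf
  have hcos : Real.cos (θ - α) < Real.cos ((2 * k - 1) * α - θ) := by
    apply core_trig α θ _ hα0 hα3 harg.1 harg.2
    · have : (2:ℝ) ≤ k := by exact_mod_cast hk2
      nlinarith
    · have : (k:ℝ) + 1 ≤ m := by exact_mod_cast hkm
      nlinarith
  apply lt_of_pow_lt_pow_left₀ 2 (norm_nonneg _)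
  rw [sq1, sq2]
  nlinarith [mul_pos hz hr0]
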